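/- Let X₁,…,Xₙ and R₁,…,Rₙ be finitely-valued random variables taking values in an additive abelian group, such that the 2n variables X₁,…,Xₙ,R₁,…,Rₙ are mutually independent, and let g be a function into the same group. Suppose that for each i, I(X_i ; g(X_i) + R_i) = 0. Then for each i, I(X_i ; (g(X₁)+R₁, …, g(Xₙ)+Rₙ, ∑_{j=1}^n R_j)) = I(X_i ; ∑_{j=1}^n g(X_j)). -/

import Mathlib

/-- Probability that a finitely-valued random variable `X` takes the value `s`. -/
noncomputable def pr {Ω S : Type*} [Fintype Ω] [DecidableEq S]
    (p : Ω → ℝ) (X : Ω → S) (s : S) : ℝ :=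
  ∑ ω, if X ω = s then p ω else 0

open Finset Real

section helpers
variable {Ω S T : Type*} [Fintype Ω]

lemma pr_nonneg [DecidableEq S] (p : Ω → ℝ) (hp : ∀ ω, 0 ≤ p ω) (X : Ω → S) (s : S) :
    0 ≤ pr p X s := by
  unfold pr
  refine Finset.sum_nonneg fun ω _ => ?_
  split
  · exact hp ω
  · exact le_refl 0

lemma pr_sum_one [Fintype S] [DecidableEq S] (p : Ω → ℝ) (hp1 : ∑ ω, p ω = 1) (X : Ω → S) :
    ∑ s, pr p X s = 1 := by
  unfold pr
  rw [Finset.sum_comm]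
  simpa using hp1

lemma pr_eq_of_iff [DecidableEq S] [DecidableEq T] (p : Ω → ℝ) (A : Ω → S) (B : Ω → T)
    (s : S) (t : T) (h : ∀ ω, A ω = s ↔ B ω = t) : pr p A s = pr p B t := by
  unfold pr
  exact Finset.sum_congr rfl fun ω _ => by rw [if_congr (h ω) rfl rfl]

lemma pr_comp [Fintype S] [DecidableEq S] [DecidableEq T] (p : Ω → ℝ) (Z : Ω → S)
    (F : S → T) (t : T) :
    pr p (fun ω => F (Z ω)) t = ∑ s, if F s = t then pr p Z s else 0 := by
  unfold pr
  have : ∀ s : S, (if F s = t then ∑ ω : Ω, if Z ω = s then p ω else 0 else 0)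
      = ∑ ω : Ω, if Z ω = s then (if F (Z ω) = t then p ω else 0) else 0 := by
    intro s
    split
    next h =>
      refine Finset.sum_congr rfl fun ω _ => ?_
      split
      next hz => rw [if_pos (by rw [hz]; exact h)]
      next => rfl
    next h =>
      symm
      refine Finset.sum_eq_zero fun ω _ => ?_
      split
      next hz => rw [if_neg (by rw [hz]; exact h)]
      next => rfl
  rw [Finset.sum_congr rfl fun s _ => this s, Finset.sum_comm]
  refine Finset.sum_congr rfl fun ω _ => ?_
  rw [Finset.sum_ite_eq univ (Z ω)]
  simp

lemma pr_fst [Fintype S] [Fintype T] [DecidableEq S] [DecidableEq T]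
    (p : Ω → ℝ) (A : Ω → S) (B : Ω → T) (a : S) :
    ∑ b, pr p (fun ω => (A ω, B ω)) (a, b) = pr p A a := by
  unfold pr
  rw [Finset.sum_comm]
  refine Finset.sum_congr rfl fun ω _ => ?_
  simp only [Prod.mk.injEq, ite_and]
  by_cases h : A ω = a <;> simp [h]

lemma pr_snd [Fintype S] [Fintype T] [DecidableEq S] [DecidableEq T]
    (p : Ω → ℝ) (A : Ω → S) (B : Ω → T) (b : T) :
    ∑ a, pr p (fun ω => (A ω, B ω)) (a, b) = pr p B b := by
  unfold pr
  rw [Finset.sum_comm]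
  refine Finset.sum_congr rfl fun ω _ => ?_
  simp only [Prod.mk.injEq, ite_and]
  by_cases h : B ω = b <;> simp [h]

lemma sum_mul_log {ι : Type*} [Fintype ι] (f : ι → ℝ) :
    ∑ x, f x * Real.log (f x) = -∑ x, Real.negMulLog (f x) := by
  rw [← Finset.sum_neg_distrib]
  exact Finset.sum_congr rfl fun x _ => by simp only [Real.negMulLog]; ring

lemma gibbs {S T : Type*} [Fintype S] [Fintype T] (P : S × T → ℝ)
    (h0 : ∀ v, 0 ≤ P v) (h1 : ∑ v, P v = 1)
    (hI : (∑ a, Real.negMulLog (∑ u, P (a, u))) + (∑ u, Real.negMulLog (∑ a, P (a, u)))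
        = ∑ v, Real.negMulLog (P v)) :
    ∀ a u, P (a, u) = (∑ u', P (a, u')) * (∑ a', P (a', u)) := by
  set m1 : S → ℝ := fun a => ∑ u, P (a, u) with hm1
  set m2 : T → ℝ := fun u => ∑ a, P (a, u) with hm2
  have hm1n : ∀ a, 0 ≤ m1 a := fun a => Finset.sum_nonneg fun u _ => h0 _
  have hm2n : ∀ u, 0 ≤ m2 u := fun u => Finset.sum_nonneg fun a _ => h0 _
  have hm1g : ∀ a u, P (a, u) ≤ m1 a := fun a u =>
    Finset.single_le_sum (f := fun u => P (a, u)) (fun u _ => h0 _) (Finset.mem_univ u)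
  have hm2g : ∀ a u, P (a, u) ≤ m2 u := fun a u =>
    Finset.single_le_sum (f := fun a => P (a, u)) (fun a _ => h0 _) (Finset.mem_univ a)
  set D : S × T → ℝ := fun v => P v * (Real.log (m1 v.1) + Real.log (m2 v.2) - Real.log (P v))
    with hD
  -- step 1 : ∑ D = 0
  have hsum1 : ∑ v : S × T, P v * Real.log (m1 v.1) = ∑ a, m1 a * Real.log (m1 a) := by
    rw [Fintype.sum_prod_type]
    refine Finset.sum_congr rfl fun a _ => ?_
    show (∑ y, P (a, y) * Real.log (m1 a)) = m1 a * Real.log (m1 a)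
    rw [← Finset.sum_mul]
  have hsum2 : ∑ v : S × T, P v * Real.log (m2 v.2) = ∑ u, m2 u * Real.log (m2 u) := by
    rw [Fintype.sum_prod_type, Finset.sum_comm]
    refine Finset.sum_congr rfl fun u _ => ?_
    show (∑ a, P (a, u) * Real.log (m2 u)) = m2 u * Real.log (m2 u)
    rw [← Finset.sum_mul]
  have hDsum : ∑ v, D v = 0 := by
    have e1 : ∑ v, D v = (∑ v : S × T, P v * Real.log (m1 v.1))
        + (∑ v : S × T, P v * Real.log (m2 v.2)) - ∑ v, P v * Real.log (P v) := by
      rw [← Finset.sum_add_distrib, ← Finset.sum_sub_distrib]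
      exact Finset.sum_congr rfl fun v _ => by ring
    rw [e1, hsum1, hsum2, sum_mul_log m1, sum_mul_log m2, sum_mul_log P]
    linarith [hI]
  -- step 2 : D v ≤ m1 v.1 * m2 v.2 - P v
  have hDle : ∀ v, D v ≤ m1 v.1 * m2 v.2 - P v := by
    rintro ⟨a, u⟩
    rcases eq_or_lt_of_le (h0 (a, u)) with hz | hpos
    · simp only [hD, ← hz, zero_mul, sub_zero]
      exact mul_nonneg (hm1n a) (hm2n u)
    · have h1p : 0 < m1 a := lt_of_lt_of_le hpos (hm1g a u)
      have h2p : 0 < m2 u := lt_of_lt_of_le hpos (hm2g a u)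
      have hq : 0 < m1 a * m2 u / P (a, u) := by positivity
      have hlog : Real.log (m1 a * m2 u / P (a, u)) ≤ m1 a * m2 u / P (a, u) - 1 :=
        Real.log_le_sub_one_of_pos hq
      have hexp : Real.log (m1 a * m2 u / P (a, u))
          = Real.log (m1 a) + Real.log (m2 u) - Real.log (P (a, u)) := by
        rw [Real.log_div (by positivity) (ne_of_gt hpos), Real.log_mul (ne_of_gt h1p) (ne_of_gt h2p)]
      have := mul_le_mul_of_nonneg_left hlog (le_of_lt hpos)
      rw [hexp] at this
      calc D (a, u) = P (a, u) * (Real.log (m1 a) + Real.log (m2 u) - Real.log (P (a, u))) := rfl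
        _ ≤ P (a, u) * (m1 a * m2 u / P (a, u) - 1) := this
        _ = m1 a * m2 u - P (a, u) := by field_simp
  -- step 3 : ∑ (m1*m2 - P) = 0
  have hsum3 : ∑ v : S × T, (m1 v.1 * m2 v.2 - P v) = 0 := by
    rw [Finset.sum_sub_distrib, h1]
    have : ∑ v : S × T, m1 v.1 * m2 v.2 = (∑ a, m1 a) * ∑ u, m2 u := by
      rw [Fintype.sum_prod_type, Finset.sum_mul]
      refine Finset.sum_congr rfl fun a _ => ?_
      show (∑ y, m1 a * m2 y) = m1 a * ∑ u, m2 u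
      rw [Finset.mul_sum]
    rw [this]
    have hs1 : ∑ a, m1 a = 1 := by rw [← h1, Fintype.sum_prod_type]
    have hs2 : ∑ u, m2 u = 1 := by rw [← h1, Fintype.sum_prod_type, Finset.sum_comm]
    rw [hs1, hs2]; ring
  -- step 4 : each term zero
  have hterm : ∀ v : S × T, m1 v.1 * m2 v.2 - P v - D v = 0 := by
    have htot : ∑ v : S × T, (m1 v.1 * m2 v.2 - P v - D v) = 0 := by
      rw [Finset.sum_sub_distrib, hsum3, hDsum]; ring
    have := (Finset.sum_eq_zero_iff_of_nonneg
      (fun v _ => sub_nonneg.mpr (hDle v))).mp htot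
    exact fun v => this v (Finset.mem_univ v)
  intro a u
  rcases eq_or_lt_of_le (h0 (a, u)) with hz | hpos
  · have := hterm (a, u)
    simp only [hD, ← hz, zero_mul, sub_zero] at this
    rw [← hz]
    linarith
  · by_contra hne
    have h1p : 0 < m1 a := lt_of_lt_of_le hpos (hm1g a u)
    have h2p : 0 < m2 u := lt_of_lt_of_le hpos (hm2g a u)
    have hq : 0 < m1 a * m2 u / P (a, u) := by positivity
    have hq1 : m1 a * m2 u / P (a, u) ≠ 1 := by
      intro h
      apply hne
      field_simp at h
      rw [h]
    have hlog : Real.log (m1 a * m2 u / P (a, u)) < m1 a * m2 u / P (a, u) - 1 :=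
      Real.log_lt_sub_one_of_pos hq hq1
    have hexp : Real.log (m1 a * m2 u / P (a, u))
        = Real.log (m1 a) + Real.log (m2 u) - Real.log (P (a, u)) := by
      rw [Real.log_div (by positivity) (ne_of_gt hpos), Real.log_mul (ne_of_gt h1p) (ne_of_gt h2p)]
    have hlt := mul_lt_mul_of_pos_left hlog hpos
    rw [hexp] at hlt
    have : P (a, u) * (m1 a * m2 u / P (a, u) - 1) = m1 a * m2 u - P (a, u) := by field_simp
    rw [this] at hlt
    have := hterm (a, u)
    have hDv : D (a, u) = P (a, u) * (Real.log (m1 a) + Real.log (m2 u) - Real.log (P (a, u))) := rfl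
    linarith [hlt, this]

lemma sum_pi_prod {n : ℕ} {γ : Type*} [Fintype γ] [DecidableEq γ] (h : Fin n → γ → ℝ) :
    ∑ f : Fin n → γ, ∏ k, h k (f k) = ∏ k, ∑ b, h k b := by
  rw [Fintype.prod_sum]

lemma sum_ite_prod {n : ℕ} {γ : Type*} [Fintype γ] [DecidableEq γ] (h : Fin n → γ → ℝ)
    (h1 : ∀ k, ∑ b, h k b = 1) (j : Fin n) (a : γ) :
    ∑ f : Fin n → γ, (if f j = a then ∏ k, h k (f k) else 0) = h j a := by
  set h' : Fin n → γ → ℝ := fun k b => if k = j then (if b = a then h k b else 0) else h k b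
    with hh'
  have key : ∀ f : Fin n → γ, (if f j = a then ∏ k, h k (f k) else 0)
      = ∏ k, h' k (f k) := by
    intro f
    by_cases hfa : f j = a
    · rw [if_pos hfa]
      exact Finset.prod_congr rfl fun k _ => by
        by_cases hk : k = j <;> simp [hh', hk, hfa]
    · rw [if_neg hfa]
      symm
      exact Finset.prod_eq_zero (Finset.mem_univ j) (by simp [hh', hfa])
  rw [Finset.sum_congr rfl fun f _ => key f, sum_pi_prod h']
  have : ∀ k, (∑ b, h' k b) = if k = j then h j a else 1 := by
    intro k
    by_cases hk : k = j
    · subst hk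
      simp [hh', Finset.sum_ite_eq' Finset.univ a]
    · simp [hh', hk, h1 k]
  rw [Finset.prod_congr rfl fun k _ => this k]
  simp

lemma entropy_factor {W S : Type*} [Fintype W] [Fintype S] [DecidableEq S] (f : W → S)
    (c : W → ℝ) (q : S → ℝ) (hc : ∀ s, ∑ w, (if f w = s then c w else 0) = 1) :
    ∑ w, Real.negMulLog (c w * q (f w))
      = ∑ s, Real.negMulLog (q s) + ∑ w, q (f w) * Real.negMulLog (c w) := by
  have step1 : ∀ w, Real.negMulLog (c w * q (f w))
      = q (f w) * Real.negMulLog (c w) + c w * Real.negMulLog (q (f w)) :=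
    fun w => Real.negMulLog_mul (c w) (q (f w))
  rw [Finset.sum_congr rfl fun w _ => step1 w, Finset.sum_add_distrib, add_comm]
  congr 1
  have e1 : ∀ w, c w * Real.negMulLog (q (f w))
      = ∑ s, if f w = s then c w * Real.negMulLog (q s) else 0 := by
    intro w
    rw [Finset.sum_ite_eq univ (f w)]
    simp
  rw [Finset.sum_congr rfl fun w _ => e1 w, Finset.sum_comm]
  refine Finset.sum_congr rfl fun s _ => ?_
  have : ∀ w, (if f w = s then c w * Real.negMulLog (q s) else 0)
      = (if f w = s then c w else 0) * Real.negMulLog (q s) := by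
    intro w; split <;> simp
  rw [Finset.sum_congr rfl fun w _ => this w, ← Finset.sum_mul, hc s, one_mul]

end helpers

/-- Shannon entropy of a finitely-valued random variable. -/
noncomputable def entropy {Ω S : Type*} [Fintype Ω] [Fintype S] [DecidableEq S]
    (p : Ω → ℝ) (X : Ω → S) : ℝ :=
  ∑ s, Real.negMulLog (pr p X s)

/-- Mutual information `I(X;Y) = H(X) + H(Y) − H(X,Y)`. -/
noncomputable def mutualInfo {Ω S T : Type*} [Fintype Ω] [Fintype S] [Fintype T]
    [DecidableEq S] [DecidableEq T] (p : Ω → ℝ) (X : Ω → S) (Y : Ω → T) : ℝ :=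
  entropy p X + entropy p Y - entropy p (fun ω => (X ω, Y ω))

theorem stmt_16 {Ω α G : Type*} [Fintype Ω] [Fintype α] [Fintype G]
    [DecidableEq α] [DecidableEq G] [AddCommGroup G]
    (n : ℕ)
    (p : Ω → ℝ) (hp : ∀ ω, 0 ≤ p ω) (hp1 : ∑ ω, p ω = 1)
    (X : Fin n → Ω → α) (R : Fin n → Ω → G) (g : α → G)
    (hindep : ∀ (sx : Fin n → α) (sr : Fin n → G),
      pr p (fun ω => ((fun i => X i ω, fun i => R i ω) : (Fin n → α) × (Fin n → G)))
          (sx, sr) =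
        (∏ i, pr p (X i) (sx i)) * ∏ i, pr p (R i) (sr i))
    (hmask : ∀ i, mutualInfo p (X i) (fun ω => g (X i ω) + R i ω) = 0) :
    ∀ i, mutualInfo p (X i)
        (fun ω => ((fun j => g (X j ω) + R j ω, ∑ j, R j ω) : (Fin n → G) × G)) =
      mutualInfo p (X i) (fun ω => ∑ j, g (X j ω)) := by
  intro i
  set ax : Fin n → α → ℝ := fun j => pr p (X j) with hax
  set br : Fin n → G → ℝ := fun j => pr p (R j) with hbr
  set β : Fin n → G → ℝ := fun j => pr p (fun ω => g (X j ω) + R j ω) with hβ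
  have h_ax1 : ∀ j, ∑ a, ax j a = 1 := fun j => pr_sum_one p hp1 (X j)
  have h_br1 : ∀ j, ∑ b, br j b = 1 := fun j => pr_sum_one p hp1 (R j)
  have hβ1 : ∀ j, ∑ u, β j u = 1 := fun j => pr_sum_one p hp1 _
  -- (2) pairwise independence of X j and R j
  have hpairXR : ∀ (j : Fin n) (a : α) (r : G),
      pr p (fun ω => (X j ω, R j ω)) (a, r) = ax j a * br j r := by
    intro j a r
    have e : pr p (fun ω => (X j ω, R j ω)) (a, r)
        = ∑ v : (Fin n → α) × (Fin n → G), if (v.1 j, v.2 j) = (a, r)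
            then pr p (fun ω => ((fun i => X i ω, fun i => R i ω) :
              (Fin n → α) × (Fin n → G))) v else 0 :=
      pr_comp p (fun ω => ((fun i => X i ω, fun i => R i ω) : (Fin n → α) × (Fin n → G)))
        (fun v => (v.1 j, v.2 j)) (a, r)
    rw [e, Fintype.sum_prod_type]
    have e2 : ∀ (sx : Fin n → α) (sr : Fin n → G),
        (if ((sx, sr).1 j, (sx, sr).2 j) = (a, r)
            then pr p (fun ω => ((fun i => X i ω, fun i => R i ω) :
              (Fin n → α) × (Fin n → G))) (sx, sr) else 0)
          = (if sx j = a then ∏ k, ax k (sx k) else 0)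
              * (if sr j = r then ∏ k, br k (sr k) else 0) := by
      intro sx sr
      rw [hindep sx sr]
      simp only [Prod.mk.injEq]
      by_cases h1 : sx j = a <;> by_cases h2 : sr j = r <;> simp [h1, h2, hax, hbr]
    rw [Finset.sum_congr rfl fun sx _ => Finset.sum_congr rfl fun sr _ => e2 sx sr,
      ← Finset.sum_mul_sum, sum_ite_prod ax h_ax1 j a, sum_ite_prod br h_br1 j r]
  -- (3) joint of X j and masked value
  have hYpair : ∀ (j : Fin n) (a : α) (u : G),
      pr p (fun ω => (X j ω, g (X j ω) + R j ω)) (a, u) = ax j a * br j (u - g a) := by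
    intro j a u
    rw [← hpairXR j a (u - g a)]
    refine pr_eq_of_iff p _ _ _ _ fun ω => ?_
    simp only [Prod.mk.injEq]
    constructor
    · rintro ⟨h1, h2⟩
      refine ⟨h1, ?_⟩
      rw [← h2, h1]
      abel
    · rintro ⟨h1, h2⟩
      refine ⟨h1, ?_⟩
      rw [h1, h2]
      abel
  -- (5) masking consequence via Gibbs
  have hM : ∀ (j : Fin n) (a : α) (u : G), ax j a * br j (u - g a) = ax j a * β j u := by
    intro j a u
    have h0 : ∀ v : α × G, 0 ≤ pr p (fun ω => (X j ω, g (X j ω) + R j ω)) v :=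
      fun v => pr_nonneg p hp _ v
    have h1 : ∑ v : α × G, pr p (fun ω => (X j ω, g (X j ω) + R j ω)) v = 1 :=
      pr_sum_one p hp1 _
    have hI : (∑ a', Real.negMulLog (∑ u', pr p (fun ω => (X j ω, g (X j ω) + R j ω)) (a', u')))
        + (∑ u', Real.negMulLog (∑ a', pr p (fun ω => (X j ω, g (X j ω) + R j ω)) (a', u')))
        = ∑ v, Real.negMulLog (pr p (fun ω => (X j ω, g (X j ω) + R j ω)) v) := by
      have hm := hmask j
      unfold mutualInfo entropy at hm
      have e1 : ∀ a' : α, (∑ u', pr p (fun ω => (X j ω, g (X j ω) + R j ω)) (a', u'))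
          = pr p (X j) a' := fun a' => pr_fst p (X j) (fun ω => g (X j ω) + R j ω) a'
      have e2 : ∀ u' : G, (∑ a', pr p (fun ω => (X j ω, g (X j ω) + R j ω)) (a', u'))
          = pr p (fun ω => g (X j ω) + R j ω) u' :=
        fun u' => pr_snd p (X j) (fun ω => g (X j ω) + R j ω) u'
      simp only [] at hm
      simp only [e1, e2]
      linarith [hm]
    have := gibbs (fun v => pr p (fun ω => (X j ω, g (X j ω) + R j ω)) v) h0 h1 hI a u
    rw [← hYpair j a u, this,
      pr_fst p (X j) (fun ω => g (X j ω) + R j ω) a,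
      pr_snd p (X j) (fun ω => g (X j ω) + R j ω) u]
  -- (6) key factorization K1
  have hK1 : ∀ (x : α) (y : Fin n → G) (t : G),
      pr p (fun ω => (X i ω, ((fun j => g (X j ω) + R j ω, ∑ j, R j ω) : (Fin n → G) × G)))
          (x, (y, t))
        = (∏ j, β j (y j))
            * pr p (fun ω => (X i ω, ∑ j, g (X j ω))) (x, (∑ j, y j) - t) := by
    intro x y t
    have eL : pr p (fun ω => (X i ω,
          ((fun j => g (X j ω) + R j ω, ∑ j, R j ω) : (Fin n → G) × G))) (x, (y, t))
        = ∑ v : (Fin n → α) × (Fin n → G),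
            if (v.1 i, ((fun j => g (v.1 j) + v.2 j, ∑ j, v.2 j) : (Fin n → G) × G)) = (x, (y, t))
              then pr p (fun ω => ((fun k => X k ω, fun k => R k ω) :
                (Fin n → α) × (Fin n → G))) v else 0 :=
      pr_comp p (fun ω => ((fun k => X k ω, fun k => R k ω) : (Fin n → α) × (Fin n → G)))
        (fun v => (v.1 i, (fun j => g (v.1 j) + v.2 j, ∑ j, v.2 j))) (x, (y, t))
    rw [eL, Fintype.sum_prod_type]
    trans ∑ sx : Fin n → α, (if (sx i = x ∧ (∑ j, g (sx j)) = (∑ j, y j) - t)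
        then (∏ j, β j (y j)) * ∏ k, ax k (sx k) else 0)
    · refine Finset.sum_congr rfl fun sx _ => ?_
      simp only [Prod.mk.injEq, hindep]
      have hcond : ∀ sr : Fin n → G,
          (sx i = x ∧ (fun j => g (sx j) + sr j) = y ∧ (∑ j, sr j) = t)
            ↔ (sr = (fun j => y j - g (sx j))
                ∧ (sx i = x ∧ (∑ j, g (sx j)) = (∑ j, y j) - t)) := by
        intro sr
        constructor
        · rintro ⟨h1, h2, h3⟩
          have hsr : sr = fun j => y j - g (sx j) := by
            funext k
            have hk : g (sx k) + sr k = y k := congrFun h2 k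
            show sr k = y k - g (sx k)
            rw [← hk]; abel
          subst hsr
          simp only [Finset.sum_sub_distrib] at h3
          refine ⟨rfl, h1, ?_⟩
          rw [← h3]; abel
        · rintro ⟨hsr, h1, h2⟩
          subst hsr
          refine ⟨h1, ?_, ?_⟩
          · funext k
            show g (sx k) + (y k - g (sx k)) = y k
            abel
          · simp only [Finset.sum_sub_distrib, h2]
            abel
      rw [Finset.sum_congr rfl fun sr _ => if_congr (hcond sr) rfl rfl]
      simp only [ite_and, Finset.sum_ite_eq', Finset.mem_univ, if_true]
      by_cases hQ : sx i = x
      · by_cases hS : (∑ j, g (sx j)) = (∑ j, y j) - t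
        · simp only [if_pos hQ, if_pos hS]
          rw [← Finset.prod_mul_distrib,
            Finset.prod_congr rfl fun k _ => hM k (sx k) (y k),
            Finset.prod_mul_distrib, mul_comm]
        · simp [hQ, hS]
      · simp [hQ]
    · have eR : pr p (fun ω => (X i ω, ∑ j, g (X j ω))) (x, (∑ j, y j) - t)
          = ∑ v : (Fin n → α) × (Fin n → G),
              if (v.1 i, ∑ j, g (v.1 j)) = (x, (∑ j, y j) - t)
                then pr p (fun ω => ((fun k => X k ω, fun k => R k ω) :
                  (Fin n → α) × (Fin n → G))) v else 0 :=
        pr_comp p (fun ω => ((fun k => X k ω, fun k => R k ω) : (Fin n → α) × (Fin n → G)))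
          (fun v => (v.1 i, ∑ j, g (v.1 j))) (x, (∑ j, y j) - t)
      rw [eR, Fintype.sum_prod_type, Finset.mul_sum]
      refine Finset.sum_congr rfl fun sx _ => ?_
      simp only [Prod.mk.injEq, hindep]
      by_cases hQ : sx i = x ∧ (∑ j, g (sx j)) = (∑ j, y j) - t
      · rw [if_pos hQ]
        have : ∀ sr : Fin n → G, (if sx i = x ∧ (∑ j, g (sx j)) = (∑ j, y j) - t
              then (∏ k, ax k (sx k)) * ∏ k, br k (sr k) else 0)
            = (∏ k, ax k (sx k)) * ∏ k, br k (sr k) := fun sr => if_pos hQ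
        rw [Finset.sum_congr rfl fun sr _ => this sr, ← Finset.mul_sum, sum_pi_prod br]
        simp only [h_br1]
        simp [mul_comm]
      · rw [if_neg hQ]
        have : ∀ sr : Fin n → G, (if sx i = x ∧ (∑ j, g (sx j)) = (∑ j, y j) - t
              then (∏ k, ax k (sx k)) * ∏ k, br k (sr k) else 0) = 0 := fun sr => if_neg hQ
        rw [Finset.sum_congr rfl fun sr _ => this sr]
        simp
  -- (7) marginal version K2
  have hK2 : ∀ (y : Fin n → G) (t : G),
      pr p (fun ω => ((fun j => g (X j ω) + R j ω, ∑ j, R j ω) : (Fin n → G) × G)) (y, t)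
        = (∏ j, β j (y j)) * pr p (fun ω => ∑ j, g (X j ω)) ((∑ j, y j) - t) := by
    intro y t
    have e1 : pr p (fun ω => ((fun j => g (X j ω) + R j ω, ∑ j, R j ω) : (Fin n → G) × G)) (y, t)
        = ∑ x, pr p (fun ω => (X i ω,
            ((fun j => g (X j ω) + R j ω, ∑ j, R j ω) : (Fin n → G) × G))) (x, (y, t)) :=
      (pr_snd p (X i) _ (y, t)).symm
    rw [e1, Finset.sum_congr rfl fun x _ => hK1 x y t, ← Finset.mul_sum,
      pr_snd p (X i) (fun ω => ∑ j, g (X j ω)) ((∑ j, y j) - t)]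
  -- (8) fibers of the coefficient sum to one
  have hN : ∀ s0 : G, ∑ w : (Fin n → G) × G,
      (if (∑ j, w.1 j) - w.2 = s0 then ∏ j, β j (w.1 j) else 0) = 1 := by
    intro s0
    rw [Fintype.sum_prod_type]
    trans ∑ y : Fin n → G, ∏ j, β j (y j)
    · refine Finset.sum_congr rfl fun y _ => ?_
      show (∑ t : G, if (∑ j, y j) - t = s0 then ∏ j, β j (y j) else 0) = ∏ j, β j (y j)
      have hiff : ∀ t : G, ((∑ j, y j) - t = s0) ↔ (t = (∑ j, y j) - s0) := by
        intro t
        constructor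
        · intro h; rw [← h]; abel
        · intro h; rw [h]; abel
      rw [Finset.sum_congr rfl fun t _ => if_congr (hiff t) rfl rfl]
      simp [Finset.sum_ite_eq']
    · rw [sum_pi_prod β]
      simp [hβ1]
  -- (9) entropy of the observed tuple
  have hEW : entropy p (fun ω => ((fun j => g (X j ω) + R j ω, ∑ j, R j ω) : (Fin n → G) × G))
      = entropy p (fun ω => ∑ j, g (X j ω))
        + ∑ w : (Fin n → G) × G, pr p (fun ω => ∑ j, g (X j ω)) ((∑ j, w.1 j) - w.2)
            * Real.negMulLog (∏ j, β j (w.1 j)) := by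
    unfold entropy
    have e : ∀ w : (Fin n → G) × G,
        pr p (fun ω => ((fun j => g (X j ω) + R j ω, ∑ j, R j ω) : (Fin n → G) × G)) w
          = (∏ j, β j (w.1 j)) * pr p (fun ω => ∑ j, g (X j ω)) ((∑ j, w.1 j) - w.2) := by
      rintro ⟨y, t⟩
      exact hK2 y t
    rw [Finset.sum_congr rfl fun w _ => by rw [e w]]
    exact entropy_factor (fun w : (Fin n → G) × G => (∑ j, w.1 j) - w.2)
      (fun w => ∏ j, β j (w.1 j)) (fun s => pr p (fun ω => ∑ j, g (X j ω)) s) hN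
  -- (10) entropy of the pair with X i
  have hc' : ∀ xs : α × G, ∑ v : α × ((Fin n → G) × G),
      (if ((v.1, (∑ j, v.2.1 j) - v.2.2) : α × G) = xs then ∏ j, β j (v.2.1 j) else 0) = 1 := by
    rintro ⟨x0, s0⟩
    rw [Fintype.sum_prod_type]
    trans ∑ x : α, (if x = x0 then (1 : ℝ) else 0)
    · refine Finset.sum_congr rfl fun x _ => ?_
      show (∑ w : (Fin n → G) × G, if ((x, (∑ j, w.1 j) - w.2) : α × G) = (x0, s0)
          then ∏ j, β j (w.1 j) else 0) = if x = x0 then 1 else 0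
      by_cases hx : x = x0
      · simp only [hx, Prod.mk.injEq, true_and, if_pos rfl]
        exact hN s0
      · simp [Prod.mk.injEq, hx]
    · simp
  have hEXW : entropy p (fun ω => (X i ω,
        ((fun j => g (X j ω) + R j ω, ∑ j, R j ω) : (Fin n → G) × G)))
      = entropy p (fun ω => (X i ω, ∑ j, g (X j ω)))
        + ∑ w : (Fin n → G) × G, pr p (fun ω => ∑ j, g (X j ω)) ((∑ j, w.1 j) - w.2)
            * Real.negMulLog (∏ j, β j (w.1 j)) := by
    unfold entropy
    have e : ∀ v : α × ((Fin n → G) × G),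
        pr p (fun ω => (X i ω,
            ((fun j => g (X j ω) + R j ω, ∑ j, R j ω) : (Fin n → G) × G))) v
          = (∏ j, β j (v.2.1 j))
              * pr p (fun ω => (X i ω, ∑ j, g (X j ω))) (v.1, (∑ j, v.2.1 j) - v.2.2) := by
      rintro ⟨x, y, t⟩
      exact hK1 x y t
    rw [Finset.sum_congr rfl fun v _ => by rw [e v]]
    trans (∑ xs : α × G, Real.negMulLog (pr p (fun ω => (X i ω, ∑ j, g (X j ω))) xs)
        + ∑ v : α × ((Fin n → G) × G),
            pr p (fun ω => (X i ω, ∑ j, g (X j ω))) (v.1, (∑ j, v.2.1 j) - v.2.2)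
              * Real.negMulLog (∏ j, β j (v.2.1 j)))
    · exact entropy_factor
        (fun v : α × ((Fin n → G) × G) => ((v.1, (∑ j, v.2.1 j) - v.2.2) : α × G))
        (fun v => ∏ j, β j (v.2.1 j))
        (fun xs => pr p (fun ω => (X i ω, ∑ j, g (X j ω))) xs) hc'
    · congr 1
      rw [Fintype.sum_prod_type, Finset.sum_comm]
      refine Finset.sum_congr rfl fun w _ => ?_
      show (∑ x : α, pr p (fun ω => (X i ω, ∑ j, g (X j ω))) (x, (∑ j, w.1 j) - w.2)
          * Real.negMulLog (∏ j, β j (w.1 j))) = _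
      rw [← Finset.sum_mul, pr_snd p (X i) (fun ω => ∑ j, g (X j ω)) ((∑ j, w.1 j) - w.2)]
  -- conclusion
  unfold mutualInfo
  rw [hEW, hEXW]
  ring
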